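/- Let d(j, k) denote the coefficient of y^j in p_k(y), and set c(j, η) = (-1)^(η+1) (2η + 3) / (η! (j - η)!) for 0 ≤ η ≤ j. Then for all integers k ≥ 1 and 0 ≤ j ≤ k, d(j, k) = ∑_{η=0}^{j} c(j, η) (4η + 5)^(k-1); moreover, for all integers j > k ≥ 1, ∑_{η=0}^{j} c(j, η) (4η + 5)^(k-1) = 0. -/

import Mathlib

open Polynomial

/-- The Csordas–Varga polynomials: `cv n` is `p_{n+1}`, where `p_1(y) = 2y - 3` and
`p_{k+1}(y) = 4y p_k'(y) + (5 - 4y) p_k(y)`. -/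
noncomputable def cv : ℕ → Polynomial ℝ
  | 0 => 2 * X - 3
  | (n+1) => 4 * X * (derivative (cv n)) + (5 - 4 * X) * (cv n)

/-- `c(j, η) = (-1)^(η+1) (2η + 3) / (η! (j - η)!)`. -/
noncomputable def c (j η : ℕ) : ℝ :=
  (-1)^(η+1) * (2*η + 3) / (η.factorial * (j - η).factorial)

open Finset

noncomputable def F (j k : ℕ) : ℝ := ∑ η ∈ Finset.range (j+1), c j η * (4*η + 5)^k

lemma cv_coeff_rec (n j : ℕ) :
    (cv (n+1)).coeff j = (4*j+5) * (cv n).coeff j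
      - 4 * (if j = 0 then 0 else (cv n).coeff (j-1)) := by
  rw [show cv (n+1) = 4 * X * (derivative (cv n)) + (5 - 4 * X) * (cv n) from rfl]
  cases j with
  | zero =>
    simp [coeff_add, mul_comm, mul_assoc, coeff_X_mul, mul_coeff_zero, sub_mul, coeff_sub]
  | succ j =>
    simp [coeff_add, mul_assoc, coeff_X_mul, sub_mul, coeff_sub, coeff_derivative,
      show (4:ℝ[X]) * (X * derivative (cv n)) = X * (4 * derivative (cv n)) by ring,
      show (4:ℝ[X]) * X * cv n = X * (4 * cv n) by ring]
    ring

lemma cv_coeff_zero (n : ℕ) : ∀ j, n + 1 < j → (cv n).coeff j = 0 := by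
  induction n with
  | zero =>
    intro j hj
    rw [show cv 0 = 2 * X - 3 from rfl]
    obtain ⟨m, rfl⟩ : ∃ m, j = m + 1 := ⟨j-1, by omega⟩
    simp [coeff_sub, coeff_X, coeff_ofNat_succ, if_neg (by omega : ¬ 1 = m + 1),
      show ¬ m = 0 by omega]
  | succ n ih =>
    intro j hj
    rw [cv_coeff_rec, ih j (by omega), if_neg (by omega), ih (j-1) (by omega)]
    ring

lemma alt1 (n : ℕ) (hn : n ≠ 0) :
    ∑ i ∈ Finset.range (n+1), (-1:ℝ)^i * n.choose i = 0 := by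
  have := Int.alternating_sum_range_choose_of_ne hn
  have h2 : ((∑ i ∈ range (n+1), (-1:ℤ)^i * n.choose i : ℤ) : ℝ) = 0 := by rw [this]; simp
  push_cast at h2
  exact h2

lemma alt2 (n : ℕ) (hn : 2 ≤ n) :
    ∑ i ∈ Finset.range (n+1), (-1:ℝ)^i * i * n.choose i = 0 := by
  rw [Finset.sum_range_succ']
  have key : ∀ i, (-1:ℝ)^(i+1) * (↑(i+1)) * n.choose (i+1) = -(n * ((-1)^i * (n-1).choose i)) := by
    intro i
    have h := Nat.add_one_mul_choose_eq (n-1) i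
    rw [Nat.sub_add_cancel (by omega)] at h
    have h' : ((n:ℝ) * (n-1).choose i) = (n.choose (i+1) : ℝ) * (↑(i+1)) := by
      exact_mod_cast congrArg (Nat.cast : ℕ → ℝ) h
    have : ((-1:ℝ))^(i+1) = -(-1)^i := by ring
    rw [this]
    rw [mul_comm ((n.choose (i+1):ℝ)) (↑(i+1))] at h'
    rw [show (-(-1:ℝ)^i) * (↑(i+1)) * ↑(n.choose (i+1)) = -((-1)^i * ((↑(i+1)) * ↑(n.choose (i+1)))) by ring, ← h']
    ring
  calc ∑ i ∈ range n, (-1:ℝ)^(i+1) * (↑(i+1)) * n.choose (i+1) + (-1)^0 * (0:ℕ) * n.choose 0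
      = ∑ i ∈ range n, -((n:ℝ) * ((-1)^i * (n-1).choose i)) := by
        simp only [key]; simp
    _ = -(n * ∑ i ∈ range ((n-1)+1), (-1:ℝ)^i * (n-1).choose i) := by
        rw [Finset.sum_neg_distrib, Finset.mul_sum, show n - 1 + 1 = n by omega]
    _ = 0 := by rw [alt1 (n-1) (by omega)]; ring

lemma F_zero (j : ℕ) (hj : 2 ≤ j) : F j 0 = 0 := by
  have hfac : (0:ℝ) < j.factorial := by positivity
  have key : F j 0 * j.factorial = 0 := by
    rw [F, Finset.sum_mul]
    have term : ∀ η ∈ range (j+1), c j η * (4*(η:ℝ)+5)^0 * j.factorial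
        = (-2) * ((-1)^η * η * j.choose η) + (-3) * ((-1)^η * j.choose η) := by
      intro η hη
      simp only [pow_zero, mul_one, c]
      have hle : η ≤ j := by simp at hη; omega
      have hch := Nat.choose_mul_factorial_mul_factorial hle
      have hch' : (j.factorial : ℝ) = j.choose η * (η.factorial * (j-η).factorial) := by
        rw [← hch]; push_cast; ring
      rw [hch']
      have hne : (η.factorial : ℝ) * (j-η).factorial ≠ 0 := by positivity
      field_simp
      ring
    rw [Finset.sum_congr rfl term, Finset.sum_add_distrib, ← Finset.mul_sum, ← Finset.mul_sum,
      alt2 j hj, alt1 j (by omega)]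
    ring
  rcases mul_eq_zero.mp key with h | h
  · exact h
  · exact absurd h (by positivity)

lemma F_base (j : ℕ) : (cv 0).coeff j = F j 0 := by
  match j with
  | 0 =>
    rw [show cv 0 = 2 * X - 3 from rfl]
    simp [F, c, coeff_sub, mul_coeff_zero]
  | 1 =>
    rw [show cv 0 = 2 * X - 3 from rfl]
    have h1 : (2 * X - 3 : ℝ[X]).coeff 1 = 2 := by
      simp [coeff_sub, coeff_ofNat_succ, coeff_ofNat_mul, coeff_X_one]
    rw [h1, F]
    simp [c, Finset.sum_range_succ]
  | (m+2) =>
    rw [cv_coeff_zero 0 (m+2) (by omega), F_zero (m+2) (by omega)]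

lemma c_succ (j η : ℕ) (h : η ≤ j) : c (j+1) η * ((j:ℝ) + 1 - η) = c j η := by
  have h1 : j + 1 - η = (j - η) + 1 := by omega
  have h2 : ((j:ℝ) + 1 - η) = ((j - η : ℕ) : ℝ) + 1 := by
    have : ((j - η : ℕ) : ℝ) = (j:ℝ) - η := by
      push_cast [Nat.cast_sub h]; ring
    rw [this]; ring
  have hD : (((j+1) - η).factorial : ℝ) = (((j-η:ℕ):ℝ)+1) * (j-η).factorial := by
    rw [h1, Nat.factorial_succ]; push_cast; ring
  rw [c, c, hD, h2]
  have h4 : (η.factorial : ℝ) * ((((j-η:ℕ):ℝ)+1) * (j-η).factorial) ≠ 0 := by positivity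
  have h5 : (η.factorial : ℝ) * (j-η).factorial ≠ 0 := by positivity
  rw [div_mul_eq_mul_div, div_eq_div_iff h4 h5]
  ring

lemma F_rec_zero (m : ℕ) : F 0 (m+1) = 5 * F 0 m := by
  simp [F]; ring

lemma F_rec (j m : ℕ) : F (j+1) (m+1) = (4*((j:ℝ)+1)+5) * F (j+1) m - 4 * F j m := by
  have expand : ∀ η ∈ range (j+2), c (j+1) η * (4*(η:ℝ)+5)^(m+1)
      = (4*((j:ℝ)+1)+5) * (c (j+1) η * (4*η+5)^m)
        - 4 * ((c (j+1) η * ((j:ℝ)+1-η)) * (4*η+5)^m) := by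
    intro η hη
    have : (4*(η:ℝ)+5)^(m+1) = (4*(η:ℝ)+5) * (4*(η:ℝ)+5)^m := by ring
    rw [this]; ring
  rw [F, Finset.sum_congr rfl expand, Finset.sum_sub_distrib, ← Finset.mul_sum, ← Finset.mul_sum]
  have h2 : ∑ η ∈ range (j+2), (c (j+1) η * ((j:ℝ)+1-η)) * (4*(η:ℝ)+5)^m = F j m := by
    rw [Finset.sum_range_succ]
    have hz : ((j:ℝ) + 1 - ((j+1 : ℕ) : ℝ)) = 0 := by push_cast; ring
    rw [hz, mul_zero, zero_mul, add_zero, F]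
    refine Finset.sum_congr rfl fun η hη => ?_
    rw [c_succ j η (by simp at hη; omega)]
  rw [h2]
  rfl

lemma main (n j : ℕ) : (cv n).coeff j = F j n := by
  induction n generalizing j with
  | zero => exact F_base j
  | succ n ih =>
    rw [cv_coeff_rec]
    cases j with
    | zero => simp [ih, F_rec_zero]
    | succ j =>
      rw [if_neg (by omega), ih, ih, show j + 1 - 1 = j from rfl, F_rec]
      push_cast
      ring

theorem stmt_11 :
    (∀ k : ℕ, 1 ≤ k → ∀ j : ℕ, j ≤ k →
      (cv (k-1)).coeff j = ∑ η ∈ Finset.range (j+1), c j η * (4*η + 5)^(k-1)) ∧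
    (∀ k j : ℕ, 1 ≤ k → k < j →
      ∑ η ∈ Finset.range (j+1), c j η * (4*η + 5)^(k-1) = 0) := by
  constructor
  · intro k hk j hj
    exact main (k-1) j
  · intro k j hk hkj
    have h1 : ∑ η ∈ Finset.range (j+1), c j η * (4*η + 5)^(k-1) = F j (k-1) := rfl
    rw [h1, ← main (k-1) j]
    apply cv_coeff_zero
    omega
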